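/- Assume (WLSC) (with the scaling inequality for λ ≤ 1, r ≤ 1). Let k, l ≥ 0 and θ, η, β, γ ∈ ℝ satisfy (β/2) ∧ (β/α_h) + 1 − θ > 0 and (γ/2) ∧ (γ/α_h) + 1 − η > 0. For every T > 0 there exists a constant c > 0 (depending only on α_h, C_h, h^{−1}(1/T) ∨ 1, θ, η, β, γ, k, l) such that for all t ∈ (0,T], ∫_0^t [Θ(u)]^l u^{−η} [h^{−1}(1/u)]^γ [Θ(t−u)]^k (t−u)^{−θ} [h^{−1}(1/(t−u))]^β du ≤ c [Θ(t)]^{l+k} t^{1−η−θ} [h^{−1}(1/t)]^{γ+β}. Moreover, Θ(t/2) ≤ c Θ(t) for t ∈ (0,T]. -/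

import Mathlib

open MeasureTheory Filter Set
open scoped ENNReal NNReal Topology RealInnerProductSpace

noncomputable section

/-- Euclidean space ℝ^d. -/
abbrev Ed (d : ℕ) := EuclideanSpace ℝ (Fin d)

/-- `h(r) = ∫_{ℝ^d} (1 ∧ |x|²/r²) ν(|x|) dx`. -/
def hfun (d : ℕ) (ν : ℝ → ℝ) (r : ℝ) : ℝ :=
  ∫ x : Ed d, min 1 (‖x‖ ^ 2 / r ^ 2) * ν ‖x‖

/-- generalized inverse `h⁻¹(s) = inf {r > 0 : h(r) ≤ s}`. -/
def hinv (d : ℕ) (ν : ℝ → ℝ) (s : ℝ) : ℝ :=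
  sInf {r : ℝ | 0 < r ∧ hfun d ν r ≤ s}

/-- `K(r) = r⁻² ∫_{|x|<r} |x|² ν(|x|) dx`. -/
def Kfun (d : ℕ) (ν : ℝ → ℝ) (r : ℝ) : ℝ :=
  r ^ (-2 : ℝ) * ∫ x in {x : Ed d | ‖x‖ < r}, ‖x‖ ^ 2 * ν ‖x‖

/-- the bound function `ρ_t(x) = [h⁻¹(1/t)]^{-d} ∧ (t K(|x|) |x|^{-d})`. -/
def rhoB (d : ℕ) (ν : ℝ → ℝ) (t : ℝ) (x : Ed d) : ℝ :=
  min (hinv d ν (1 / t) ^ (-(d : ℝ))) (t * Kfun d ν ‖x‖ * ‖x‖ ^ (-(d : ℝ)))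

/-- `Θ(t) = 1 + ln(1 ∨ [h⁻¹(1/t)]⁻¹)`. -/
def Theta (d : ℕ) (ν : ℝ → ℝ) (t : ℝ) : ℝ :=
  1 + Real.log (max 1 (hinv d ν (1 / t))⁻¹)

/-- `ϱ^γ_β(t,x) = [h⁻¹(1/t)]^γ (|x|^β ∧ 1) t⁻¹ ρ_t(x)`. -/
def errf (d : ℕ) (ν : ℝ → ℝ) (γ β t : ℝ) (x : Ed d) : ℝ :=
  hinv d ν (1 / t) ^ γ * min (‖x‖ ^ β) 1 * t⁻¹ * rhoB d ν t x

/-- standing assumptions on ν, including `h(0+) = ∞`. -/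
def NuOK (d : ℕ) (ν : ℝ → ℝ) : Prop :=
  Measurable ν ∧ (∀ r, 0 ≤ ν r) ∧ AntitoneOn ν (Ici 0) ∧
  Integrable (fun x : Ed d => min 1 (‖x‖ ^ 2) * ν ‖x‖) ∧
  Tendsto (hfun d ν) (𝓝[>] 0) atTop

/-- `λ_J⁻¹ ν(|x|) ≤ J(x) ≤ λ_J ν(|x|)`. -/
def JOK (d : ℕ) (ν : ℝ → ℝ) (lJ : ℝ) (J : Ed d → ℝ) : Prop :=
  1 ≤ lJ ∧ Measurable J ∧ ∀ x, lJ⁻¹ * ν ‖x‖ ≤ J x ∧ J x ≤ lJ * ν ‖x‖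

/-- weak lower scaling condition at the origin. -/
def WLSC (d : ℕ) (ν : ℝ → ℝ) (ah Ch : ℝ) : Prop :=
  ah ∈ Ioc (0 : ℝ) 2 ∧ 1 ≤ Ch ∧
  ∀ lam r : ℝ, 0 < lam → lam ≤ 1 → 0 < r → r ≤ 1 →
    hfun d ν r ≤ Ch * lam ^ ah * hfun d ν (lam * r)

/-- weak upper scaling condition at the origin. -/
def WUSC (d : ℕ) (ν : ℝ → ℝ) (bh ch : ℝ) : Prop :=
  bh ∈ Ioc (0 : ℝ) 2 ∧ ch ∈ Ioc (0 : ℝ) 1 ∧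
  ∀ lam r : ℝ, 0 < lam → lam ≤ 1 → 0 < r → r ≤ 1 →
    ch * lam ^ bh * hfun d ν (lam * r) ≤ hfun d ν r

/-- the assumptions on the coefficient κ(x,z). -/
def KapOK (d : ℕ) (ν : ℝ → ℝ) (J : Ed d → ℝ) (κf : Ed d → Ed d → ℝ)
    (κ0 κ1 κ2 κ3 κ4 β : ℝ) : Prop :=
  Measurable (Function.uncurry κf) ∧ 0 < κ0 ∧
  (∀ x z, κ0 ≤ κf x z ∧ κf x z ≤ κ1) ∧
  β ∈ Ioo (0 : ℝ) 1 ∧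
  (∀ x y z, |κf x z - κf y z| ≤ κ2 * ‖x - y‖ ^ β) ∧
  0 ≤ κ3 ∧ 0 ≤ κ4 ∧
  (∀ x : Ed d, ∀ r ∈ Ioc (0 : ℝ) 1,
    ‖∫ z in {z : Ed d | r ≤ ‖z‖ ∧ ‖z‖ < 1}, (κf x z * J z) • z‖ ≤ κ3 * (r * hfun d ν r)) ∧
  (∀ x y : Ed d, ∀ r ∈ Ioc (0 : ℝ) 1,
    ‖∫ z in {z : Ed d | r ≤ ‖z‖ ∧ ‖z‖ < 1}, ((κf x z - κf y z) * J z) • z‖ ≤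
      κ4 * ‖x - y‖ ^ β * (r * hfun d ν r))

/-- condition (Q0). -/
def Q0 (d : ℕ) (ν : ℝ → ℝ) (lJ : ℝ) (J : Ed d → ℝ) (κf : Ed d → Ed d → ℝ)
    (κ0 κ1 κ2 κ3 κ4 β ah Ch : ℝ) : Prop :=
  NuOK d ν ∧ JOK d ν lJ J ∧ KapOK d ν J κf κ0 κ1 κ2 κ3 κ4 β ∧ WLSC d ν ah Ch ∧ ah ≤ 1

/-- condition (Q1). -/
def Q1 (d : ℕ) (ν : ℝ → ℝ) (lJ : ℝ) (J : Ed d → ℝ) (κf : Ed d → Ed d → ℝ)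
    (κ0 κ1 κ2 κ3 κ4 β ah Ch : ℝ) : Prop :=
  NuOK d ν ∧ JOK d ν lJ J ∧ KapOK d ν J κf κ0 κ1 κ2 κ3 κ4 β ∧ WLSC d ν ah Ch ∧ ah = 1

/-- condition (Q2). -/
def Q2 (d : ℕ) (ν : ℝ → ℝ) (lJ : ℝ) (J : Ed d → ℝ) (κf : Ed d → Ed d → ℝ)
    (κ0 κ1 κ2 κ3 κ4 β ah Ch bh ch : ℝ) : Prop :=
  NuOK d ν ∧ JOK d ν lJ J ∧ KapOK d ν J κf κ0 κ1 κ2 κ3 κ4 β ∧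
  WLSC d ν ah Ch ∧ WUSC d ν bh ch ∧ ah ≤ bh ∧ bh < 1 ∧ 1 - ah < min β ah

/-- Kf is admissible. -/
def Admis (d : ℕ) (ν : ℝ → ℝ) (J : Ed d → ℝ) (κ0 κ1 κ3 : ℝ) (Kf : Ed d → ℝ) : Prop :=
  Measurable Kf ∧ (∀ z, κ0 ≤ Kf z ∧ Kf z ≤ κ1) ∧
  ∀ r ∈ Ioc (0 : ℝ) 1,
    ‖∫ z in {z : Ed d | r ≤ ‖z‖ ∧ ‖z‖ < 1}, (Kf z * J z) • z‖ ≤ κ3 * (r * hfun d ν r)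

/-- the Lévy–Khintchine exponent of the operator with frozen coefficient Kf. -/
def psiK (d : ℕ) (J Kf : Ed d → ℝ) (ξ : Ed d) : ℂ :=
  ∫ z : Ed d,
    (1 - Complex.exp (Complex.I * (⟪ξ, z⟫ : ℂ))
      + Complex.I * (⟪ξ, z⟫ : ℂ) * (if ‖z‖ < 1 then 1 else 0)) * ((Kf z * J z : ℝ) : ℂ)

/-- the heat kernel of L^Kf as a function of `t` and `w = y - x`. -/
def pLevy (d : ℕ) (J Kf : Ed d → ℝ) (t : ℝ) (w : Ed d) : ℝ :=
  ((2 * Real.pi) ^ d)⁻¹ *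
    (∫ ξ : Ed d,
      Complex.exp (-(Complex.I * (⟪ξ, w⟫ : ℂ)) - (t : ℂ) * psiK d J Kf ξ)).re

/-- `p^Kf(t,x,y) = p^Kf(t, y - x)`. -/
def pKer (d : ℕ) (J Kf : Ed d → ℝ) (t : ℝ) (x y : Ed d) : ℝ :=
  pLevy d J Kf t (y - x)

/-- `δ^Kf(t,x,y;z)`. -/
def deltaK (d : ℕ) (J Kf : Ed d → ℝ) (t : ℝ) (x y z : Ed d) : ℝ :=
  pKer d J Kf t (x + z) y - pKer d J Kf t x y -
    (if ‖z‖ < 1 then ⟪z, gradient (fun u => pKer d J Kf t u y) x⟫ else 0)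

/-- `L_x^{Kg} p^Kf(t,x,y) = ∫ δ^Kf(t,x,y;z) Kg(z) J(z) dz`. -/
def LKop (d : ℕ) (J Kg Kf : Ed d → ℝ) (t : ℝ) (x y : Ed d) : ℝ :=
  ∫ z : Ed d, deltaK d J Kf t x y z * (Kg z * J z)

/-- `q₀(t,x,y)`. -/
def q0f (d : ℕ) (J : Ed d → ℝ) (κf : Ed d → Ed d → ℝ) (t : ℝ) (x y : Ed d) : ℝ :=
  ∫ z : Ed d, deltaK d J (κf y) t x y z * ((κf x z - κf y z) * J z)

/-- `q_n(t,x,y)`. -/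
def qnf (d : ℕ) (J : Ed d → ℝ) (κf : Ed d → Ed d → ℝ) : ℕ → ℝ → Ed d → Ed d → ℝ
  | 0 => q0f d J κf
  | n + 1 => fun t x y =>
      ∫ s in Ioo (0 : ℝ) t, ∫ z : Ed d, q0f d J κf (t - s) x z * qnf d J κf n s z y

/-- `q(t,x,y) = Σ_n q_n(t,x,y)`. -/
def qf (d : ℕ) (J : Ed d → ℝ) (κf : Ed d → Ed d → ℝ) (t : ℝ) (x y : Ed d) : ℝ :=
  ∑' n : ℕ, qnf d J κf n t x y

/-- the parametrix heat kernel `p^κ(t,x,y)`. -/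
def pkap (d : ℕ) (J : Ed d → ℝ) (κf : Ed d → Ed d → ℝ) (t : ℝ) (x y : Ed d) : ℝ :=
  pKer d J (κf y) t x y +
    ∫ s in Ioo (0 : ℝ) t, ∫ z : Ed d, pKer d J (κf z) (t - s) x z * qf d J κf s z y

/-- the integral defining `L^{κ,ε} f(x)` (over `{|z| > ε}`; `ε = 0` gives `L^κ`). -/
def Lint (d : ℕ) (J : Ed d → ℝ) (κf : Ed d → Ed d → ℝ) (ε : ℝ) (f : Ed d → ℝ) (x : Ed d) : ℝ :=
  ∫ z in {z : Ed d | ε < ‖z‖},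
    (f (x + z) - f x - (if ‖z‖ < 1 then ⟪z, gradient f x⟫ else 0)) * (κf x z * J z)

/-- `L^{κ,ε} f(x)` is well defined. -/
def LintDef (d : ℕ) (J : Ed d → ℝ) (κf : Ed d → Ed d → ℝ) (ε : ℝ) (f : Ed d → ℝ)
    (x : Ed d) : Prop :=
  DifferentiableAt ℝ f x ∧
  IntegrableOn (fun z : Ed d =>
      (f (x + z) - f x - (if ‖z‖ < 1 then ⟪z, gradient f x⟫ else 0)) * (κf x z * J z))
    {z : Ed d | ε < ‖z‖}

/-- `L^{κ,0+} f(x)` is well defined with value `A`. -/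
def L0plus (d : ℕ) (J : Ed d → ℝ) (κf : Ed d → Ed d → ℝ) (f : Ed d → ℝ) (x : Ed d)
    (A : ℝ) : Prop :=
  (∀ ε ∈ Ioc (0 : ℝ) 1, LintDef d J κf ε f x) ∧
  Tendsto (fun ε => Lint d J κf ε f x) (𝓝[>] 0) (𝓝 A)

/-- iterated coordinate partial derivatives: `∂^𝛃` for the multi-index recorded by a list. -/
def pdList (d : ℕ) : List (Fin d) → (Ed d → ℝ) → Ed d → ℝ
  | [], f => f
  | i :: l, f => fun x => fderiv ℝ (pdList d l f) x (EuclideanSpace.single i 1)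


namespace Aux62

lemma integrand_meas {d : ℕ} {ν : ℝ → ℝ} (hν : Measurable ν) (r : ℝ) :
    Measurable (fun x : Ed d => min 1 (‖x‖ ^ 2 / r ^ 2) * ν ‖x‖) := by
  have h1 : Measurable (fun x : Ed d => ‖x‖) := measurable_norm
  exact (measurable_const.min ((h1.pow_const 2).div_const _)).mul (hν.comp h1)

lemma integrand_integrable {d : ℕ} {ν : ℝ → ℝ} (hν : NuOK d ν) {r : ℝ} (hr : 0 < r) :
    Integrable (fun x : Ed d => min 1 (‖x‖ ^ 2 / r ^ 2) * ν ‖x‖) := by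
  refine (hν.2.2.2.1.const_mul (max 1 (r ^ 2)⁻¹)).mono'
    ((integrand_meas hν.1 r).aestronglyMeasurable) (ae_of_all _ fun x => ?_)
  have hb : (0:ℝ) ≤ ‖x‖ ^ 2 := sq_nonneg _
  have hν0 := hν.2.1 ‖x‖
  have hr2 : (0:ℝ) < r ^ 2 := by positivity
  have key : min 1 (‖x‖ ^ 2 / r ^ 2) ≤ max 1 (r ^ 2)⁻¹ * min 1 (‖x‖ ^ 2) := by
    rcases le_or_gt (‖x‖ ^ 2) 1 with h | h
    · rw [min_eq_right h]
      calc min 1 (‖x‖ ^ 2 / r ^ 2) ≤ ‖x‖ ^ 2 / r ^ 2 := min_le_right _ _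
        _ = (r ^ 2)⁻¹ * ‖x‖ ^ 2 := by ring
        _ ≤ max 1 (r ^ 2)⁻¹ * ‖x‖ ^ 2 := by
            exact mul_le_mul_of_nonneg_right (le_max_right _ _) hb
    · rw [min_eq_left h.le]
      calc min 1 (‖x‖ ^ 2 / r ^ 2) ≤ 1 := min_le_left _ _
        _ ≤ max 1 (r ^ 2)⁻¹ * 1 := by
            rw [mul_one]; exact le_max_left _ _
  have key2 : min 1 (‖x‖ ^ 2 / r ^ 2) * ν ‖x‖ ≤
      max 1 (r ^ 2)⁻¹ * (min 1 (‖x‖ ^ 2) * ν ‖x‖) := by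
    rw [← mul_assoc]; exact mul_le_mul_of_nonneg_right key hν0
  have hnn : 0 ≤ min 1 (‖x‖ ^ 2 / r ^ 2) * ν ‖x‖ := by
    apply mul_nonneg _ hν0
    exact le_min zero_le_one (by positivity)
  rw [Real.norm_eq_abs, abs_of_nonneg hnn]
  exact key2

lemma hfun_anti {d : ℕ} {ν : ℝ → ℝ} (hν : NuOK d ν) {r r' : ℝ} (hr : 0 < r) (hrr' : r ≤ r') :
    hfun d ν r' ≤ hfun d ν r := by
  refine integral_mono (integrand_integrable hν (hr.trans_le hrr')) (integrand_integrable hν hr)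
    fun x => ?_
  have hν0 := hν.2.1 ‖x‖
  refine mul_le_mul_of_nonneg_right (min_le_min le_rfl ?_) hν0
  apply div_le_div_of_nonneg_left (sq_nonneg _) (by positivity)
  exact pow_le_pow_left₀ hr.le hrr' 2

lemma hfun_scale2 {d : ℕ} {ν : ℝ → ℝ} (hν : NuOK d ν) {lam r : ℝ}
    (h0 : 0 < lam) (h1 : lam ≤ 1) (hr : 0 < r) :
    hfun d ν (lam * r) ≤ (lam ^ 2)⁻¹ * hfun d ν r := by
  have hlr : 0 < lam * r := mul_pos h0 hr
  rw [hfun, hfun, ← integral_const_mul]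
  refine integral_mono (integrand_integrable hν hlr)
    ((integrand_integrable hν hr).const_mul _) fun x => ?_
  have hν0 := hν.2.1 ‖x‖
  rw [← mul_assoc]
  refine mul_le_mul_of_nonneg_right ?_ hν0
  have hc : (1:ℝ) ≤ (lam ^ 2)⁻¹ := by
    rw [le_inv_comm₀ one_pos (by positivity), inv_one]
    exact pow_le_one₀ h0.le h1
  have heq : ‖x‖ ^ 2 / (lam * r) ^ 2 = (lam ^ 2)⁻¹ * (‖x‖ ^ 2 / r ^ 2) := by
    rw [mul_pow]; rw [div_mul_eq_div_div_swap, inv_mul_eq_div]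
  rw [heq]
  rcases le_or_gt (‖x‖ ^ 2 / r ^ 2) 1 with h | h
  · calc min 1 ((lam ^ 2)⁻¹ * (‖x‖ ^ 2 / r ^ 2)) ≤ (lam ^ 2)⁻¹ * (‖x‖ ^ 2 / r ^ 2) :=
        min_le_right _ _
      _ = (lam ^ 2)⁻¹ * min 1 (‖x‖ ^ 2 / r ^ 2) := by rw [min_eq_right h]
  · calc min 1 ((lam ^ 2)⁻¹ * (‖x‖ ^ 2 / r ^ 2)) ≤ 1 := min_le_left _ _
      _ = (lam ^ 2)⁻¹ * min 1 (‖x‖ ^ 2 / r ^ 2) * (lam^2) := by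
          rw [min_eq_left h.le]; field_simp
      _ ≤ (lam ^ 2)⁻¹ * min 1 (‖x‖ ^ 2 / r ^ 2) * 1 := by
          refine mul_le_mul_of_nonneg_left (by nlinarith) ?_
          rw [min_eq_left h.le, mul_one]; positivity
      _ = (lam ^ 2)⁻¹ * min 1 (‖x‖ ^ 2 / r ^ 2) := mul_one _

end Aux62
namespace Aux62

lemma exists_hfun_le {d : ℕ} {ν : ℝ → ℝ} (hν : NuOK d ν) {s : ℝ} (hs : 0 < s) :
    ∃ r : ℝ, 0 < r ∧ hfun d ν r ≤ s := by
  have hden : Tendsto (fun n : ℕ => ((n : ℝ) + 1) ^ 2) atTop atTop := by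
    refine tendsto_atTop_mono (fun n => ?_) tendsto_natCast_atTop_atTop
    nlinarith [Nat.cast_nonneg (α := ℝ) n]
  have hlim : Tendsto (fun n : ℕ => hfun d ν ((n : ℝ) + 1)) atTop (𝓝 (∫ _x : Ed d, (0:ℝ))) := by
    refine tendsto_integral_of_dominated_convergence
      (fun x : Ed d => min 1 (‖x‖ ^ 2) * ν ‖x‖)
      (fun n => (integrand_meas hν.1 _).aestronglyMeasurable) hν.2.2.2.1
      (fun n => ae_of_all _ fun x => ?_) (ae_of_all _ fun x => ?_)
    · have hν0 := hν.2.1 ‖x‖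
      have hnn : 0 ≤ min 1 (‖x‖ ^ 2 / ((n : ℝ) + 1) ^ 2) * ν ‖x‖ := by
        apply mul_nonneg _ hν0
        exact le_min zero_le_one (by positivity)
      rw [Real.norm_eq_abs, abs_of_nonneg hnn]
      refine mul_le_mul_of_nonneg_right (min_le_min le_rfl ?_) hν0
      have h1 : (1:ℝ) ≤ ((n : ℝ) + 1) ^ 2 := by nlinarith [Nat.cast_nonneg (α := ℝ) n]
      calc ‖x‖ ^ 2 / ((n : ℝ) + 1) ^ 2 ≤ ‖x‖ ^ 2 / 1 :=
            div_le_div_of_nonneg_left (sq_nonneg _) one_pos h1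
        _ = ‖x‖ ^ 2 := div_one _
    · have h1 : Tendsto (fun n : ℕ => ‖x‖ ^ 2 / ((n : ℝ) + 1) ^ 2) atTop (𝓝 0) :=
        tendsto_const_nhds.div_atTop hden
      have h2 : Tendsto (fun n : ℕ => min 1 (‖x‖ ^ 2 / ((n : ℝ) + 1) ^ 2)) atTop (𝓝 0) := by
        have hc : Continuous (fun y : ℝ => min 1 y) := continuous_const.min continuous_id
        have := (hc.tendsto (0:ℝ)).comp h1
        simpa [Function.comp_def] using this
      simpa using h2.mul_const (ν ‖x‖)
  rw [integral_zero] at hlim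
  have := hlim.eventually_lt_const hs
  obtain ⟨n, hn⟩ := this.exists
  exact ⟨(n : ℝ) + 1, by positivity, hn.le⟩

lemma hinv_nonneg {d : ℕ} {ν : ℝ → ℝ} (s : ℝ) : 0 ≤ hinv d ν s :=
  Real.sInf_nonneg fun r hr => hr.1.le

lemma hinv_pos {d : ℕ} {ν : ℝ → ℝ} (hν : NuOK d ν) {s : ℝ} (hs : 0 < s) :
    0 < hinv d ν s := by
  have hev : ∀ᶠ r in 𝓝[>] (0:ℝ), s + 1 ≤ hfun d ν r := hν.2.2.2.2.eventually_ge_atTop (s + 1)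
  obtain ⟨ε, hε, hsub⟩ := mem_nhdsGT_iff_exists_Ioo_subset.1 hev
  have hε0 : (0:ℝ) < ε := hε
  refine lt_of_lt_of_le hε0 (le_csInf ?_ fun r hr => ?_)
  · obtain ⟨r, hr0, hrs⟩ := exists_hfun_le hν hs
    exact ⟨r, hr0, hrs⟩
  · by_contra hlt
    push_neg at hlt
    have : r ∈ Ioo (0:ℝ) ε := ⟨hr.1, hlt⟩
    have := hsub this
    simp only [mem_setOf_eq] at this
    linarith [hr.2]

lemma hfun_le_of_hinv_lt {d : ℕ} {ν : ℝ → ℝ} (hν : NuOK d ν) {s r : ℝ} (hs : 0 < s)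
    (hr : hinv d ν s < r) : hfun d ν r ≤ s := by
  have hne : {r' : ℝ | 0 < r' ∧ hfun d ν r' ≤ s}.Nonempty := by
    obtain ⟨r', h1, h2⟩ := exists_hfun_le hν hs; exact ⟨r', h1, h2⟩
  have hbdd : BddBelow {r' : ℝ | 0 < r' ∧ hfun d ν r' ≤ s} := ⟨0, fun x hx => hx.1.le⟩
  obtain ⟨r', ⟨hr'0, hr's⟩, hr'r⟩ := (csInf_lt_iff hbdd hne).1 hr
  exact le_trans (hfun_anti hν hr'0 hr'r.le) hr's

lemma lt_hfun_of_lt_hinv {d : ℕ} {ν : ℝ → ℝ} (hν : NuOK d ν) {s r : ℝ} (hs : 0 < s)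
    (h0 : 0 < r) (hr : r < hinv d ν s) : s < hfun d ν r := by
  by_contra hle
  push_neg at hle
  have : hinv d ν s ≤ r := csInf_le ⟨0, fun x hx => hx.1.le⟩ ⟨h0, hle⟩
  linarith

lemma hinv_anti {d : ℕ} {ν : ℝ → ℝ} (hν : NuOK d ν) {s s' : ℝ} (hs : 0 < s) (hss' : s ≤ s') :
    hinv d ν s' ≤ hinv d ν s := by
  refine csInf_le_csInf ⟨0, fun x hx => hx.1.le⟩ ?_ fun r hr => ⟨hr.1, hr.2.trans hss'⟩
  obtain ⟨r, h1, h2⟩ := exists_hfun_le hν hs; exact ⟨r, h1, h2⟩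

end Aux62
namespace Aux62

lemma hinv_upper {d : ℕ} {ν : ℝ → ℝ} (hν : NuOK d ν) {u t : ℝ} (hu : 0 < u) (hut : u ≤ t) :
    hinv d ν (1 / u) ≤ (u / t) ^ ((1:ℝ) / 2) * hinv d ν (1 / t) := by
  have ht : 0 < t := hu.trans_le hut
  set lam := (u / t) ^ ((1:ℝ) / 2) with hlam_def
  have hdiv : 0 < u / t := div_pos hu ht
  have hlam0 : 0 < lam := Real.rpow_pos_of_pos hdiv _
  have hlam1 : lam ≤ 1 := Real.rpow_le_one hdiv.le (div_le_one_of_le₀ hut ht.le) (by norm_num)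
  have hlamsq : lam ^ 2 = u / t := by
    rw [hlam_def, ← Real.rpow_natCast ((u / t) ^ ((1:ℝ)/2)) 2, ← Real.rpow_mul hdiv.le]
    norm_num
  have key : ∀ r', hinv d ν (1 / t) < r' → hinv d ν (1 / u) / lam ≤ r' := by
    intro r' hr'
    have hr'0 : 0 < r' := lt_of_le_of_lt (hinv_nonneg _) hr'
    have h1 : hfun d ν r' ≤ 1 / t := hfun_le_of_hinv_lt hν (by positivity) hr'
    have h2 : hfun d ν (lam * r') ≤ (lam ^ 2)⁻¹ * hfun d ν r' := hfun_scale2 hν hlam0 hlam1 hr'0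
    have h3 : hfun d ν (lam * r') ≤ 1 / u := by
      calc hfun d ν (lam * r') ≤ (lam ^ 2)⁻¹ * hfun d ν r' := h2
        _ ≤ (lam ^ 2)⁻¹ * (1 / t) := by
            exact mul_le_mul_of_nonneg_left h1 (by positivity)
        _ = 1 / u := by rw [hlamsq]; field_simp
    have : hinv d ν (1 / u) ≤ lam * r' :=
      csInf_le ⟨0, fun x hx => hx.1.le⟩ ⟨by positivity, h3⟩
    rw [div_le_iff₀ hlam0]
    linarith [this, mul_comm lam r']
  have := le_of_forall_gt_imp_ge_of_dense key
  rw [div_le_iff₀ hlam0] at this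
  linarith [this, mul_comm lam (hinv d ν (1 / t))]

lemma hinv_lower {d : ℕ} {ν : ℝ → ℝ} {ah Ch : ℝ} (hν : NuOK d ν) (hls : WLSC d ν ah Ch)
    {u t : ℝ} (hu : 0 < u) (hut : u ≤ t) :
    (u / (Ch * t)) ^ (1 / ah) * min (hinv d ν (1 / t)) 1 ≤ hinv d ν (1 / u) := by
  have ht : 0 < t := hu.trans_le hut
  have hCh : 1 ≤ Ch := hls.2.1
  have hah : 0 < ah := hls.1.1
  set lam := (u / (Ch * t)) ^ (1 / ah) with hlam_def
  have hdiv : 0 < u / (Ch * t) := div_pos hu (by positivity)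
  have hdiv1 : u / (Ch * t) ≤ 1 := by
    rw [div_le_one (by positivity)]; nlinarith
  have hlam0 : 0 < lam := Real.rpow_pos_of_pos hdiv _
  have hlam1 : lam ≤ 1 := Real.rpow_le_one hdiv.le hdiv1 (by positivity)
  have hlampow : Ch * lam ^ ah = u / t := by
    rw [hlam_def, ← Real.rpow_mul hdiv.le, one_div, inv_mul_cancel₀ hah.ne', Real.rpow_one]
    field_simp
  set m := min (hinv d ν (1 / t)) 1 with hm_def
  have hm0 : 0 < m := lt_min (hinv_pos hν (by positivity)) one_pos
  refine le_of_forall_lt_imp_le_of_dense fun a ha => ?_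
  rcases le_or_gt a 0 with ha0 | ha0
  · exact ha0.trans (hinv_nonneg _)
  set r := a / lam with hr_def
  have hr0 : 0 < r := div_pos ha0 hlam0
  have hrm : r < m := by
    rw [hr_def, div_lt_iff₀ hlam0]
    calc a < lam * m := ha
      _ = m * lam := mul_comm _ _
  have hr1 : r ≤ 1 := hrm.le.trans (min_le_right _ _)
  have hrA : r < hinv d ν (1 / t) := hrm.trans_le (min_le_left _ _)
  have h1 : 1 / t < hfun d ν r := lt_hfun_of_lt_hinv hν (by positivity) hr0 hrA
  have h2 : hfun d ν r ≤ u / t * hfun d ν (lam * r) := by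
    calc hfun d ν r ≤ Ch * lam ^ ah * hfun d ν (lam * r) := hls.2.2 lam r hlam0 hlam1 hr0 hr1
      _ = u / t * hfun d ν (lam * r) := by rw [hlampow]
  have h3 : 1 / u < hfun d ν (lam * r) := by
    have h4 : 1 / t < u / t * hfun d ν (lam * r) := lt_of_lt_of_le h1 h2
    rw [div_lt_iff₀ hu]
    have h4' : (1:ℝ) < u / t * hfun d ν (lam * r) * t := (div_lt_iff₀ ht).1 h4
    have he : u / t * hfun d ν (lam * r) * t = hfun d ν (lam * r) * u := by
      field_simp
    rw [he] at h4'
    exact h4'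
  by_contra hcon
  push_neg at hcon
  have halam : a = lam * r := by rw [hr_def]; field_simp
  have : hinv d ν (1 / u) < lam * r := by rw [← halam]; exact hcon
  have := hfun_le_of_hinv_lt hν (by positivity) this
  linarith

end Aux62
namespace Aux62

lemma hinv_lower' {d : ℕ} {ν : ℝ → ℝ} {ah Ch : ℝ} (hν : NuOK d ν) (hls : WLSC d ν ah Ch)
    {T : ℝ} (hT : 0 < T) :
    ∃ c2 : ℝ, 0 < c2 ∧ c2 ≤ 1 ∧ ∀ t : ℝ, 0 < t → t ≤ T → ∀ u : ℝ, 0 < u → u ≤ t →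
      c2 * ((u / t) ^ (1 / ah) * hinv d ν (1 / t)) ≤ hinv d ν (1 / u) := by
  have hCh : 1 ≤ Ch := hls.2.1
  have hah : 0 < ah := hls.1.1
  set M := max (hinv d ν (1 / T)) 1 with hM_def
  have hM1 : 1 ≤ M := le_max_right _ _
  set c2 := Ch ^ (-(1 / ah)) / M with hc2_def
  have hChp : (0:ℝ) < Ch ^ (-(1 / ah)) := Real.rpow_pos_of_pos (by linarith) _
  have hChle : Ch ^ (-(1 / ah)) ≤ 1 := by
    apply Real.rpow_le_one_of_one_le_of_nonpos hCh
    simp only [neg_nonpos]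
    positivity
  refine ⟨c2, by positivity, ?_, ?_⟩
  · rw [hc2_def, div_le_one (by linarith)]
    exact hChle.trans hM1
  intro t ht htT u hu hut
  have hAt : 0 < hinv d ν (1 / t) := hinv_pos hν (by positivity)
  have hAtM : hinv d ν (1 / t) ≤ M := by
    refine le_trans ?_ (le_max_left _ _)
    exact hinv_anti hν (by positivity) (by
      apply div_le_div_of_nonneg_left one_pos.le ht htT)
  have hmin : hinv d ν (1 / t) / M ≤ min (hinv d ν (1 / t)) 1 := by
    rcases le_total (hinv d ν (1 / t)) 1 with h | h
    · rw [min_eq_left h]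
      exact div_le_self hAt.le hM1
    · rw [min_eq_right h, div_le_one (by linarith)]
      exact hAtM
  have hsplit : (u / (Ch * t)) ^ (1 / ah) = Ch ^ (-(1 / ah)) * (u / t) ^ (1 / ah) := by
    have : u / (Ch * t) = Ch⁻¹ * (u / t) := by field_simp
    rw [this, Real.mul_rpow (by positivity) (by positivity),
      Real.inv_rpow (by linarith : (0:ℝ) ≤ Ch), ← Real.rpow_neg (by linarith : (0:ℝ) ≤ Ch)]
  have key := hinv_lower hν hls hu hut
  rw [hsplit] at key
  calc c2 * ((u / t) ^ (1 / ah) * hinv d ν (1 / t))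
      = Ch ^ (-(1 / ah)) * (u / t) ^ (1 / ah) * (hinv d ν (1 / t) / M) := by
        rw [hc2_def]; ring
    _ ≤ Ch ^ (-(1 / ah)) * (u / t) ^ (1 / ah) * min (hinv d ν (1 / t)) 1 := by
        refine mul_le_mul_of_nonneg_left hmin (by positivity)
    _ ≤ hinv d ν (1 / u) := key

lemma hinv_rpow_bound {d : ℕ} {ν : ℝ → ℝ} {ah Ch : ℝ} (hν : NuOK d ν) (hls : WLSC d ν ah Ch)
    {T : ℝ} (hT : 0 < T) (γ : ℝ) :
    ∃ C : ℝ, 0 < C ∧ ∀ t : ℝ, 0 < t → t ≤ T → ∀ u : ℝ, 0 < u → u ≤ t →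
      hinv d ν (1 / u) ^ γ ≤
        C * ((u / t) ^ min (γ / 2) (γ / ah) * hinv d ν (1 / t) ^ γ) := by
  obtain ⟨c2, hc20, hc21, hc2⟩ := hinv_lower' hν hls hT
  have hah : 0 < ah := hls.1.1
  have hah2 : ah ≤ 2 := hls.1.2
  refine ⟨max 1 (c2 ^ γ), lt_of_lt_of_le one_pos (le_max_left _ _), ?_⟩
  intro t ht htT u hu hut
  have hAt : 0 < hinv d ν (1 / t) := hinv_pos hν (by positivity)
  have hAu : 0 < hinv d ν (1 / u) := hinv_pos hν (by positivity)
  have hdiv : 0 < u / t := div_pos hu (hu.trans_le hut)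
  rcases le_or_gt 0 γ with hγ | hγ
  · have hmin : min (γ / 2) (γ / ah) = γ / 2 := by
      rw [min_eq_left]
      exact div_le_div_of_nonneg_left hγ hah hah2
    rw [hmin]
    have hup := hinv_upper hν hu hut
    have := Real.rpow_le_rpow hAu.le hup hγ
    calc hinv d ν (1 / u) ^ γ ≤ ((u / t) ^ ((1:ℝ) / 2) * hinv d ν (1 / t)) ^ γ := this
      _ = (u / t) ^ (γ / 2) * hinv d ν (1 / t) ^ γ := by
          rw [Real.mul_rpow (by positivity) hAt.le, ← Real.rpow_mul hdiv.le]
          ring_nf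
      _ ≤ max 1 (c2 ^ γ) * ((u / t) ^ (γ / 2) * hinv d ν (1 / t) ^ γ) := by
          nlinarith [Real.rpow_nonneg hdiv.le (γ / 2), Real.rpow_nonneg hAt.le γ,
            mul_nonneg (Real.rpow_nonneg hdiv.le (γ / 2)) (Real.rpow_nonneg hAt.le γ),
            le_max_left 1 (c2 ^ γ)]
  · have hmin : min (γ / 2) (γ / ah) = γ / ah := by
      rw [min_eq_right]
      rw [div_le_div_iff₀ hah two_pos]
      nlinarith
    rw [hmin]
    have hlow := hc2 t ht htT u hu hut
    have hpos : 0 < c2 * ((u / t) ^ (1 / ah) * hinv d ν (1 / t)) := by positivity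
    have := Real.rpow_le_rpow_of_nonpos hpos hlow hγ.le
    calc hinv d ν (1 / u) ^ γ ≤ (c2 * ((u / t) ^ (1 / ah) * hinv d ν (1 / t))) ^ γ := this
      _ = c2 ^ γ * ((u / t) ^ (γ / ah) * hinv d ν (1 / t) ^ γ) := by
          rw [Real.mul_rpow hc20.le (by positivity),
            Real.mul_rpow (by positivity) hAt.le, ← Real.rpow_mul hdiv.le]
          ring_nf
      _ ≤ max 1 (c2 ^ γ) * ((u / t) ^ (γ / ah) * hinv d ν (1 / t) ^ γ) := by
          refine mul_le_mul_of_nonneg_right (le_max_right _ _) (by positivity)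

end Aux62
namespace Aux62

lemma one_le_theta (d : ℕ) (ν : ℝ → ℝ) (t : ℝ) : 1 ≤ Theta d ν t := by
  have : 0 ≤ Real.log (max 1 (hinv d ν (1 / t))⁻¹) :=
    Real.log_nonneg (le_max_left _ _)
  unfold Theta; linarith

lemma theta_eps {d : ℕ} {ν : ℝ → ℝ} {ah Ch : ℝ} (hν : NuOK d ν) (hls : WLSC d ν ah Ch)
    {T : ℝ} (hT : 0 < T) {ε : ℝ} (hε : 0 < ε) :
    ∃ C : ℝ, 0 < C ∧ ∀ t : ℝ, 0 < t → t ≤ T → ∀ u : ℝ, 0 < u → u ≤ t →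
      Theta d ν u ≤ C * ((t / u) ^ ε * Theta d ν t) := by
  obtain ⟨c2, hc20, hc21, hc2⟩ := hinv_lower' hν hls hT
  have hah : 0 < ah := hls.1.1
  set K := 1 + Real.log c2⁻¹ with hK_def
  have hc2inv : 1 ≤ c2⁻¹ := (one_le_inv₀ hc20).2 hc21
  have hK1 : 1 ≤ K := by
    have := Real.log_nonneg hc2inv
    rw [hK_def]; linarith
  refine ⟨K + 1 / (ah * ε), by positivity, ?_⟩
  intro t ht htT u hu hut
  have hAt : 0 < hinv d ν (1 / t) := hinv_pos hν (by positivity)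
  have hAu : 0 < hinv d ν (1 / u) := hinv_pos hν (by positivity)
  have hdiv : 1 ≤ t / u := (one_le_div hu).2 hut
  -- step 1:  Theta u ≤ (K + (1/ah) * log (t/u)) * Theta t
  have hlow := hc2 t ht htT u hu hut
  have hinv_ineq : (hinv d ν (1 / u))⁻¹ ≤ c2⁻¹ * ((t / u) ^ (1 / ah) * (hinv d ν (1 / t))⁻¹) := by
    have h1 : 0 < c2 * ((u / t) ^ (1 / ah) * hinv d ν (1 / t)) := by positivity
    have h2 := inv_anti₀ h1 hlow
    calc (hinv d ν (1 / u))⁻¹ ≤ (c2 * ((u / t) ^ (1 / ah) * hinv d ν (1 / t)))⁻¹ := h2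
      _ = c2⁻¹ * ((t / u) ^ (1 / ah) * (hinv d ν (1 / t))⁻¹) := by
          have h3 : (t / u) ^ ((1:ℝ) / ah) = (((u / t) ^ ((1:ℝ) / ah))⁻¹ : ℝ) := by
            rw [← Real.inv_rpow (by positivity), inv_div]
          rw [mul_inv, mul_inv, h3]
  have hmax : max 1 (hinv d ν (1 / u))⁻¹ ≤
      c2⁻¹ * ((t / u) ^ (1 / ah) * max 1 (hinv d ν (1 / t))⁻¹) := by
    have hrp1 : 1 ≤ (t / u) ^ ((1:ℝ) / ah) := Real.one_le_rpow hdiv (by positivity)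
    have hRHS1 : 1 ≤ c2⁻¹ * ((t / u) ^ (1 / ah) * max 1 (hinv d ν (1 / t))⁻¹) := by
      have h1 : (1:ℝ) ≤ max 1 (hinv d ν (1 / t))⁻¹ := le_max_left _ _
      have h2 : (1:ℝ) ≤ (t / u) ^ ((1:ℝ) / ah) * max 1 (hinv d ν (1 / t))⁻¹ := by
        calc (1:ℝ) = 1 * 1 := (mul_one 1).symm
          _ ≤ (t / u) ^ ((1:ℝ) / ah) * max 1 (hinv d ν (1 / t))⁻¹ :=
              mul_le_mul hrp1 h1 zero_le_one (by positivity)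
      calc (1:ℝ) = 1 * 1 := (mul_one 1).symm
        _ ≤ c2⁻¹ * ((t / u) ^ (1 / ah) * max 1 (hinv d ν (1 / t))⁻¹) :=
            mul_le_mul hc2inv h2 zero_le_one (by positivity)
    refine max_le hRHS1 ?_
    calc (hinv d ν (1 / u))⁻¹ ≤ c2⁻¹ * ((t / u) ^ (1 / ah) * (hinv d ν (1 / t))⁻¹) := hinv_ineq
      _ ≤ c2⁻¹ * ((t / u) ^ (1 / ah) * max 1 (hinv d ν (1 / t))⁻¹) := by
          refine mul_le_mul_of_nonneg_left (mul_le_mul_of_nonneg_left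
            (le_max_right _ _) (by positivity)) (by positivity)
  have hlog : Real.log (max 1 (hinv d ν (1 / u))⁻¹) ≤
      Real.log c2⁻¹ + (1 / ah) * Real.log (t / u) + Real.log (max 1 (hinv d ν (1 / t))⁻¹) := by
    have h1 : (0:ℝ) < max 1 (hinv d ν (1 / u))⁻¹ := lt_of_lt_of_le one_pos (le_max_left _ _)
    calc Real.log (max 1 (hinv d ν (1 / u))⁻¹)
        ≤ Real.log (c2⁻¹ * ((t / u) ^ (1 / ah) * max 1 (hinv d ν (1 / t))⁻¹)) :=
          Real.log_le_log h1 hmax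
      _ = Real.log c2⁻¹ + (1 / ah) * Real.log (t / u) +
            Real.log (max 1 (hinv d ν (1 / t))⁻¹) := by
          rw [Real.log_mul (by positivity) (by positivity),
            Real.log_mul (by positivity) (by positivity),
            Real.log_rpow (by positivity)]
          ring
  set L := Real.log (t / u) with hL_def
  have hL0 : 0 ≤ L := Real.log_nonneg hdiv
  have hlogt : 0 ≤ Real.log (max 1 (hinv d ν (1 / t))⁻¹) := Real.log_nonneg (le_max_left _ _)
  have step1 : Theta d ν u ≤ (K + (1 / ah) * L) * Theta d ν t := by
    have hTt : Theta d ν t = 1 + Real.log (max 1 (hinv d ν (1 / t))⁻¹) := rfl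
    have hTu : Theta d ν u = 1 + Real.log (max 1 (hinv d ν (1 / u))⁻¹) := rfl
    rw [hTt, hTu]
    have hahinv : 0 < 1 / ah := by positivity
    have hKl : Real.log c2⁻¹ = K - 1 := by rw [hK_def]; ring
    nlinarith [hlog, mul_nonneg (mul_nonneg hahinv.le hL0) hlogt,
      mul_nonneg (sub_nonneg.2 hK1) hlogt]
  -- step 2: K + (1/ah) L ≤ (K + 1/(ah ε)) * (t/u)^ε
  have hrp : (0:ℝ) < (t / u) ^ ε := Real.rpow_pos_of_pos (by positivity) _
  have hrp1 : 1 ≤ (t / u) ^ ε := Real.one_le_rpow hdiv hε.le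
  have hlogle : L ≤ (t / u) ^ ε / ε := by
    have h1 : Real.log ((t / u) ^ ε) ≤ (t / u) ^ ε - 1 := Real.log_le_sub_one_of_pos hrp
    rw [Real.log_rpow (by positivity), ← hL_def] at h1
    rw [le_div_iff₀ hε]
    nlinarith
  have step2 : K + (1 / ah) * L ≤ (K + 1 / (ah * ε)) * (t / u) ^ ε := by
    have h2 : (1 / ah) * L ≤ (1 / (ah * ε)) * (t / u) ^ ε := by
      rw [div_mul_eq_mul_div, div_mul_eq_mul_div, one_mul, one_mul,
        div_le_div_iff₀ hah (by positivity)]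
      calc L * (ah * ε) = ah * (ε * L) := by ring
        _ ≤ ah * ((t / u) ^ ε) := by
            refine mul_le_mul_of_nonneg_left ?_ hah.le
            rw [le_div_iff₀ hε] at hlogle
            linarith
        _ = (t / u) ^ ε * ah := mul_comm _ _
    have h3 : K ≤ K * (t / u) ^ ε := le_mul_of_one_le_right (by linarith) hrp1
    calc K + (1 / ah) * L ≤ K * (t / u) ^ ε + (1 / (ah * ε)) * (t / u) ^ ε := by linarith
      _ = (K + 1 / (ah * ε)) * (t / u) ^ ε := by ring
  have hΘt : 0 ≤ Theta d ν t := le_trans zero_le_one (one_le_theta d ν t)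
  calc Theta d ν u ≤ (K + (1 / ah) * L) * Theta d ν t := step1
    _ ≤ ((K + 1 / (ah * ε)) * (t / u) ^ ε) * Theta d ν t :=
        mul_le_mul_of_nonneg_right step2 hΘt
    _ = (K + 1 / (ah * ε)) * ((t / u) ^ ε * Theta d ν t) := by ring

end Aux62
namespace Aux62

lemma rpow_sub_integrableOn {q t : ℝ} (hq : -1 < q) (ht : 0 < t) :
    IntegrableOn (fun u : ℝ => (t - u) ^ q) (Ioo (t / 2) t) := by
  have h1 : IntervalIntegrable (fun x : ℝ => x ^ q) volume 0 (t / 2) :=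
    intervalIntegral.intervalIntegrable_rpow' hq
  have h2 := (h1.comp_sub_left t).symm
  have he1 : t - t / 2 = t / 2 := by ring
  have he2 : t - 0 = t := by ring
  rw [he1, he2] at h2
  have h3 : IntegrableOn (fun x : ℝ => (t - x) ^ q) (Ioc (t / 2) t) :=
    (intervalIntegrable_iff_integrableOn_Ioc_of_le (by linarith)).1 h2
  exact h3.mono_set Ioo_subset_Ioc_self

lemma rpow_integrableOn {p t : ℝ} (hp : -1 < p) (ht : 0 < t) :
    IntegrableOn (fun u : ℝ => u ^ p) (Ioc 0 (t / 2)) := by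
  have h1 : IntervalIntegrable (fun x : ℝ => x ^ p) volume 0 (t / 2) :=
    intervalIntegral.intervalIntegrable_rpow' hp
  exact (intervalIntegrable_iff_integrableOn_Ioc_of_le (by linarith)).1 h1

lemma beta_bound {p q : ℝ} (hp : -1 < p) (hq : -1 < q) :
    ∃ K : ℝ, 0 < K ∧ ∀ t : ℝ, 0 < t →
      IntegrableOn (fun u : ℝ => u ^ p * (t - u) ^ q) (Ioo 0 t) ∧
      ∫ u in Ioo (0:ℝ) t, u ^ p * (t - u) ^ q ≤ K * t ^ (p + q + 1) := by
  refine ⟨(2:ℝ) ^ |q| / (p + 1) + (2:ℝ) ^ |p| / (q + 1),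
    add_pos (div_pos (Real.rpow_pos_of_pos two_pos _) (by linarith))
      (div_pos (Real.rpow_pos_of_pos two_pos _) (by linarith)), fun t ht => ?_⟩
  have hmeas : Measurable (fun u : ℝ => u ^ p * (t - u) ^ q) :=
    (measurable_id.pow measurable_const).mul
      ((measurable_const.sub measurable_id).pow measurable_const)
  -- pointwise bounds on the two halves
  have hbound1 : ∀ u ∈ Ioc (0:ℝ) (t / 2),
      u ^ p * (t - u) ^ q ≤ (2:ℝ) ^ |q| * t ^ q * u ^ p := by
    intro u hu
    have hu0 : 0 < u := hu.1
    have hut : u ≤ t / 2 := hu.2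
    have htu : t / 2 ≤ t - u := by linarith
    have htu0 : 0 < t - u := by linarith
    have hq' : (t - u) ^ q ≤ (2:ℝ) ^ |q| * t ^ q := by
      rcases le_or_gt 0 q with h | h
      · rw [abs_of_nonneg h]
        calc (t - u) ^ q ≤ t ^ q := Real.rpow_le_rpow htu0.le (by linarith) h
          _ ≤ (2:ℝ) ^ q * t ^ q := by
              have h2 : (1:ℝ) ≤ (2:ℝ) ^ q := Real.one_le_rpow one_le_two h
              nlinarith [Real.rpow_nonneg ht.le q]
      · rw [abs_of_neg h]
        calc (t - u) ^ q ≤ (t / 2) ^ q :=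
            Real.rpow_le_rpow_of_nonpos (by linarith) htu h.le
          _ = (2:ℝ) ^ (-q) * t ^ q := by
              rw [div_eq_mul_inv, mul_comm, Real.mul_rpow (by positivity) ht.le,
                ← Real.rpow_neg_one (2:ℝ), ← Real.rpow_mul (by norm_num)]
              ring_nf
    calc u ^ p * (t - u) ^ q ≤ u ^ p * ((2:ℝ) ^ |q| * t ^ q) :=
        mul_le_mul_of_nonneg_left hq' (Real.rpow_nonneg hu0.le p)
      _ = (2:ℝ) ^ |q| * t ^ q * u ^ p := by ring
  have hbound2 : ∀ u ∈ Ioo (t / 2) t,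
      u ^ p * (t - u) ^ q ≤ (2:ℝ) ^ |p| * t ^ p * (t - u) ^ q := by
    intro u hu
    have hu0 : 0 < u := lt_trans (by linarith) hu.1
    have htu0 : 0 < t - u := by linarith [hu.2]
    have hp' : u ^ p ≤ (2:ℝ) ^ |p| * t ^ p := by
      rcases le_or_gt 0 p with h | h
      · rw [abs_of_nonneg h]
        calc u ^ p ≤ t ^ p := Real.rpow_le_rpow hu0.le hu.2.le h
          _ ≤ (2:ℝ) ^ p * t ^ p := by
              have h2 : (1:ℝ) ≤ (2:ℝ) ^ p := Real.one_le_rpow one_le_two h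
              nlinarith [Real.rpow_nonneg ht.le p]
      · rw [abs_of_neg h]
        calc u ^ p ≤ (t / 2) ^ p :=
            Real.rpow_le_rpow_of_nonpos (by linarith) hu.1.le h.le
          _ = (2:ℝ) ^ (-p) * t ^ p := by
              rw [div_eq_mul_inv, mul_comm, Real.mul_rpow (by positivity) ht.le,
                ← Real.rpow_neg_one (2:ℝ), ← Real.rpow_mul (by norm_num)]
              ring_nf
    exact mul_le_mul_of_nonneg_right hp' (Real.rpow_nonneg htu0.le q)
  -- integrability on the two halves
  have hint1 : IntegrableOn (fun u : ℝ => u ^ p * (t - u) ^ q) (Ioc 0 (t / 2)) := by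
    refine Integrable.mono' (((rpow_integrableOn hp ht).const_mul ((2:ℝ) ^ |q| * t ^ q)))
      (hmeas.aestronglyMeasurable.restrict) ?_
    rw [ae_restrict_iff' measurableSet_Ioc]
    refine ae_of_all _ fun u hu => ?_
    have hnn : 0 ≤ u ^ p * (t - u) ^ q := by
      apply mul_nonneg (Real.rpow_nonneg hu.1.le p) (Real.rpow_nonneg (by linarith [hu.2]) q)
    rw [Real.norm_eq_abs, abs_of_nonneg hnn]
    exact hbound1 u hu
  have hint2 : IntegrableOn (fun u : ℝ => u ^ p * (t - u) ^ q) (Ioo (t / 2) t) := by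
    refine Integrable.mono' ((rpow_sub_integrableOn hq ht).const_mul ((2:ℝ) ^ |p| * t ^ p))
      (hmeas.aestronglyMeasurable.restrict) ?_
    rw [ae_restrict_iff' measurableSet_Ioo]
    refine ae_of_all _ fun u hu => ?_
    have hu0 : 0 < u := lt_trans (by linarith) hu.1
    have hnn : 0 ≤ u ^ p * (t - u) ^ q := by
      apply mul_nonneg (Real.rpow_nonneg hu0.le p) (Real.rpow_nonneg (by linarith [hu.2]) q)
    rw [Real.norm_eq_abs, abs_of_nonneg hnn]
    exact hbound2 u hu
  have hsplit : Ioo (0:ℝ) t = Ioc 0 (t / 2) ∪ Ioo (t / 2) t :=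
    (Ioc_union_Ioo_eq_Ioo (by linarith) (by linarith)).symm
  have hdisj : Disjoint (Ioc (0:ℝ) (t / 2)) (Ioo (t / 2) t) := by
    rw [Set.disjoint_left]
    intro u h1 h2
    exact absurd h2.1 (not_lt.2 h1.2)
  have hintall : IntegrableOn (fun u : ℝ => u ^ p * (t - u) ^ q) (Ioo 0 t) := by
    rw [hsplit]
    exact hint1.union hint2
  refine ⟨hintall, ?_⟩
  -- value of the two half integrals
  have hval : ∀ r : ℝ, -1 < r → ∫ u in Ioc (0:ℝ) (t / 2), u ^ r ≤ t ^ (r + 1) / (r + 1) := by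
    intro r hr
    rw [← intervalIntegral.integral_of_le (by linarith : (0:ℝ) ≤ t / 2),
      integral_rpow (Or.inl hr),
      Real.zero_rpow (by linarith : r + 1 ≠ 0), sub_zero]
    have h1 : (t / 2) ^ (r + 1) ≤ t ^ (r + 1) := by
      apply Real.rpow_le_rpow (by linarith) (by linarith) (by linarith)
    gcongr
    linarith
  have hv2 : ∫ u in Ioo (t / 2) t, (t - u) ^ q ≤ t ^ (q + 1) / (q + 1) := by
    have he : ∫ u in Ioo (t / 2) t, (t - u) ^ q = ∫ u in Ioc (t / 2) t, (t - u) ^ q :=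
      (integral_Ioc_eq_integral_Ioo).symm
    rw [he, ← intervalIntegral.integral_of_le (by linarith : t / 2 ≤ t)]
    have hc := intervalIntegral.integral_comp_sub_left (a := t / 2) (b := t)
      (fun x : ℝ => x ^ q) t
    rw [hc, show t - t = 0 by ring, show t - t / 2 = t / 2 by ring,
      intervalIntegral.integral_of_le (by linarith : (0:ℝ) ≤ t / 2)]
    exact hval q hq
  rw [hsplit, setIntegral_union hdisj measurableSet_Ioo hint1 hint2]
  have hI1 : ∫ u in Ioc (0:ℝ) (t / 2), u ^ p * (t - u) ^ q ≤
      (2:ℝ) ^ |q| / (p + 1) * t ^ (p + q + 1) := by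
    calc ∫ u in Ioc (0:ℝ) (t / 2), u ^ p * (t - u) ^ q
        ≤ ∫ u in Ioc (0:ℝ) (t / 2), (2:ℝ) ^ |q| * t ^ q * u ^ p :=
          setIntegral_mono_on hint1 ((rpow_integrableOn hp ht).const_mul _)
            measurableSet_Ioc hbound1
      _ = (2:ℝ) ^ |q| * t ^ q * ∫ u in Ioc (0:ℝ) (t / 2), u ^ p := integral_const_mul _ _
      _ ≤ (2:ℝ) ^ |q| * t ^ q * (t ^ (p + 1) / (p + 1)) := by
          refine mul_le_mul_of_nonneg_left (hval p hp) (by positivity)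
      _ = (2:ℝ) ^ |q| / (p + 1) * (t ^ q * t ^ (p + 1)) := by ring
      _ = (2:ℝ) ^ |q| / (p + 1) * t ^ (p + q + 1) := by
          rw [← Real.rpow_add ht]
          ring_nf
  have hI2 : ∫ u in Ioo (t / 2) t, u ^ p * (t - u) ^ q ≤
      (2:ℝ) ^ |p| / (q + 1) * t ^ (p + q + 1) := by
    calc ∫ u in Ioo (t / 2) t, u ^ p * (t - u) ^ q
        ≤ ∫ u in Ioo (t / 2) t, (2:ℝ) ^ |p| * t ^ p * (t - u) ^ q := by
          refine setIntegral_mono_on hint2 ((rpow_sub_integrableOn hq ht).const_mul _)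
            measurableSet_Ioo hbound2
      _ = (2:ℝ) ^ |p| * t ^ p * ∫ u in Ioo (t / 2) t, (t - u) ^ q := integral_const_mul _ _
      _ ≤ (2:ℝ) ^ |p| * t ^ p * (t ^ (q + 1) / (q + 1)) := by
          refine mul_le_mul_of_nonneg_left hv2 (by positivity)
      _ = (2:ℝ) ^ |p| / (q + 1) * (t ^ p * t ^ (q + 1)) := by ring
      _ = (2:ℝ) ^ |p| / (q + 1) * t ^ (p + q + 1) := by
          rw [← Real.rpow_add ht]
          ring_nf
  calc (∫ u in Ioc (0:ℝ) (t / 2), u ^ p * (t - u) ^ q) +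
        ∫ u in Ioo (t / 2) t, u ^ p * (t - u) ^ q
      ≤ (2:ℝ) ^ |q| / (p + 1) * t ^ (p + q + 1) +
        (2:ℝ) ^ |p| / (q + 1) * t ^ (p + q + 1) := add_le_add hI1 hI2
    _ = ((2:ℝ) ^ |q| / (p + 1) + (2:ℝ) ^ |p| / (q + 1)) * t ^ (p + q + 1) := by ring

end Aux62
namespace Aux62

lemma triple_bound {d : ℕ} {ν : ℝ → ℝ} {ah Ch : ℝ} (hν : NuOK d ν) (hls : WLSC d ν ah Ch)
    {T : ℝ} (hT : 0 < T) (l η γ ε : ℝ) (hl : 0 ≤ l) (hε : 0 < ε) :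
    ∃ C : ℝ, 0 < C ∧ ∀ t : ℝ, 0 < t → t ≤ T → ∀ w : ℝ, 0 < w → w ≤ t →
      Theta d ν w ^ l * w ^ (-η) * hinv d ν (1 / w) ^ γ ≤
        C * (Theta d ν t ^ l * hinv d ν (1 / t) ^ γ *
          t ^ (ε * l - min (γ / 2) (γ / ah))) *
          w ^ (min (γ / 2) (γ / ah) - η - ε * l) := by
  obtain ⟨CE, hCE0, hCE⟩ := theta_eps hν hls hT hε
  obtain ⟨Cγ, hCγ0, hCγ⟩ := hinv_rpow_bound hν hls hT γ
  refine ⟨CE ^ l * Cγ, by positivity, ?_⟩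
  intro t ht htT w hw hwt
  have hΘw0 : (0:ℝ) ≤ Theta d ν w := le_trans zero_le_one (one_le_theta d ν w)
  have hΘt0 : (0:ℝ) ≤ Theta d ν t := le_trans zero_le_one (one_le_theta d ν t)
  have hAw0 : (0:ℝ) ≤ hinv d ν (1 / w) := hinv_nonneg _
  have hAt0 : (0:ℝ) ≤ hinv d ν (1 / t) := hinv_nonneg _
  have hdvw : (0:ℝ) ≤ t / w := by positivity
  have h1 : Theta d ν w ^ l ≤ CE ^ l * ((t / w) ^ (ε * l) * Theta d ν t ^ l) := by
    have := Real.rpow_le_rpow hΘw0 (hCE t ht htT w hw hwt) hl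
    calc Theta d ν w ^ l ≤ (CE * ((t / w) ^ ε * Theta d ν t)) ^ l := this
      _ = CE ^ l * ((t / w) ^ (ε * l) * Theta d ν t ^ l) := by
          rw [Real.mul_rpow hCE0.le (by positivity),
            Real.mul_rpow (by positivity) hΘt0, Real.rpow_mul hdvw]
  have h2 : hinv d ν (1 / w) ^ γ ≤
      Cγ * ((w / t) ^ min (γ / 2) (γ / ah) * hinv d ν (1 / t) ^ γ) := hCγ t ht htT w hw hwt
  have hrhs1 : (0:ℝ) ≤ CE ^ l * ((t / w) ^ (ε * l) * Theta d ν t ^ l) := by positivity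
  have step : Theta d ν w ^ l * w ^ (-η) * hinv d ν (1 / w) ^ γ ≤
      CE ^ l * ((t / w) ^ (ε * l) * Theta d ν t ^ l) * w ^ (-η) *
        (Cγ * ((w / t) ^ min (γ / 2) (γ / ah) * hinv d ν (1 / t) ^ γ)) := by
    refine mul_le_mul ?_ h2 (Real.rpow_nonneg hAw0 _) (by positivity)
    exact mul_le_mul h1 le_rfl (Real.rpow_nonneg hw.le _) hrhs1
  refine le_trans step (le_of_eq ?_)
  have e1 : (t / w) ^ (ε * l) = t ^ (ε * l) * w ^ (-(ε * l)) := by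
    rw [Real.div_rpow ht.le hw.le, Real.rpow_neg hw.le, div_eq_mul_inv]
  have e2 : (w / t) ^ min (γ / 2) (γ / ah) =
      w ^ min (γ / 2) (γ / ah) * t ^ (-min (γ / 2) (γ / ah)) := by
    rw [Real.div_rpow hw.le ht.le, Real.rpow_neg ht.le, div_eq_mul_inv]
  have e3 : w ^ (min (γ / 2) (γ / ah) - η - ε * l) =
      w ^ min (γ / 2) (γ / ah) * w ^ (-η) * w ^ (-(ε * l)) := by
    rw [show min (γ / 2) (γ / ah) - η - ε * l
        = min (γ / 2) (γ / ah) + -η + -(ε * l) by ring,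
      Real.rpow_add hw, Real.rpow_add hw]
  have e4 : t ^ (ε * l - min (γ / 2) (γ / ah)) =
      t ^ (ε * l) * t ^ (-min (γ / 2) (γ / ah)) := by
    rw [show ε * l - min (γ / 2) (γ / ah) = ε * l + -min (γ / 2) (γ / ah) by ring,
      Real.rpow_add ht]
  rw [e1, e2, e3, e4]
  ring

end Aux62
namespace Aux62

lemma measurable_B {d : ℕ} {ν : ℝ → ℝ} (hν : NuOK d ν) :
    Measurable (fun u : ℝ => if 0 < u then hinv d ν (1 / u) else 0) := by
  apply Monotone.measurable
  intro a b hab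
  by_cases ha : 0 < a
  · have hb : 0 < b := lt_of_lt_of_le ha hab
    simp only [ha, hb, if_true]
    exact hinv_anti hν (by positivity) (one_div_le_one_div_of_le ha hab)
  · simp only [ha, if_false]
    by_cases hb : 0 < b
    · simp only [hb, if_true]
      exact hinv_nonneg _
    · simp only [hb, if_false, le_refl]

end Aux62

/-- Lemma 6.2: a convolution-type inequality for `Θ` and `h⁻¹`. -/
theorem statement_19
    (d : ℕ) (hd : 0 < d) (ν : ℝ → ℝ) (ah Ch : ℝ)
    (hν : NuOK d ν) (hls : WLSC d ν ah Ch)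
    (k l θ η β γ : ℝ) (hk : 0 ≤ k) (hl : 0 ≤ l)
    (hβ : 0 < min (β / 2) (β / ah) + 1 - θ)
    (hγ : 0 < min (γ / 2) (γ / ah) + 1 - η) :
    ∀ T > (0 : ℝ), ∃ c > (0 : ℝ),
      (∀ t ∈ Ioc (0 : ℝ) T,
        IntegrableOn (fun u : ℝ =>
            Theta d ν u ^ l * u ^ (-η) * hinv d ν (1 / u) ^ γ *
              (Theta d ν (t - u) ^ k * (t - u) ^ (-θ) * hinv d ν (1 / (t - u)) ^ β))
          (Ioo 0 t) ∧
        (∫ u in Ioo (0 : ℝ) t,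
            Theta d ν u ^ l * u ^ (-η) * hinv d ν (1 / u) ^ γ *
              (Theta d ν (t - u) ^ k * (t - u) ^ (-θ) * hinv d ν (1 / (t - u)) ^ β)) ≤
          c * Theta d ν t ^ (l + k) * t ^ (1 - η - θ) * hinv d ν (1 / t) ^ (γ + β)) ∧
      (∀ t ∈ Ioc (0 : ℝ) T, Theta d ν (t / 2) ≤ c * Theta d ν t) := by
  intro T hT
  have hεγ : 0 < (min (γ / 2) (γ / ah) + 1 - η) / (2 * (l + 1)) := by positivity
  have hεβ : 0 < (min (β / 2) (β / ah) + 1 - θ) / (2 * (k + 1)) := by positivity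
  set ε := min ((min (γ / 2) (γ / ah) + 1 - η) / (2 * (l + 1)))
      ((min (β / 2) (β / ah) + 1 - θ) / (2 * (k + 1))) with hε_def
  have hε : 0 < ε := lt_min hεγ hεβ
  have hp : -1 < min (γ / 2) (γ / ah) - η - ε * l := by
    have h1 : ε * l ≤ (min (γ / 2) (γ / ah) + 1 - η) / (2 * (l + 1)) * l :=
      mul_le_mul_of_nonneg_right (min_le_left _ _) hl
    have h2 : (min (γ / 2) (γ / ah) + 1 - η) / (2 * (l + 1)) * l <
        min (γ / 2) (γ / ah) + 1 - η := by
      rw [div_mul_eq_mul_div, div_lt_iff₀ (by positivity)]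
      nlinarith
    linarith
  have hq : -1 < min (β / 2) (β / ah) - θ - ε * k := by
    have h1 : ε * k ≤ (min (β / 2) (β / ah) + 1 - θ) / (2 * (k + 1)) * k :=
      mul_le_mul_of_nonneg_right (min_le_right _ _) hk
    have h2 : (min (β / 2) (β / ah) + 1 - θ) / (2 * (k + 1)) * k <
        min (β / 2) (β / ah) + 1 - θ := by
      rw [div_mul_eq_mul_div, div_lt_iff₀ (by positivity)]
      nlinarith
    linarith
  obtain ⟨C1, hC10, hC1⟩ := Aux62.triple_bound hν hls hT l η γ ε hl hε
  obtain ⟨C2, hC20, hC2⟩ := Aux62.triple_bound hν hls hT k θ β ε hk hε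
  obtain ⟨K, hK0, hK⟩ := Aux62.beta_bound hp hq
  obtain ⟨CT, hCT0, hCT⟩ := Aux62.theta_eps hν hls hT one_pos
  refine ⟨max (C1 * C2 * K) (2 * CT),
    lt_of_lt_of_le (by positivity) (le_max_left _ _), ?_, ?_⟩
  · -- main integral estimate
    intro t htmem
    obtain ⟨ht0, htT⟩ := htmem
    have hΘt1 : (1:ℝ) ≤ Theta d ν t := Aux62.one_le_theta d ν t
    have hΘt0 : (0:ℝ) < Theta d ν t := lt_of_lt_of_le one_pos hΘt1
    have hAt : 0 < hinv d ν (1 / t) := Aux62.hinv_pos hν (by positivity)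
    have hΘtl : 0 < Theta d ν t ^ l := Real.rpow_pos_of_pos hΘt0 _
    have hΘtk : 0 < Theta d ν t ^ k := Real.rpow_pos_of_pos hΘt0 _
    have hAtγ : 0 < hinv d ν (1 / t) ^ γ := Real.rpow_pos_of_pos hAt _
    have hAtβ : 0 < hinv d ν (1 / t) ^ β := Real.rpow_pos_of_pos hAt _
    set D1 := C1 * (Theta d ν t ^ l * hinv d ν (1 / t) ^ γ *
      t ^ (ε * l - min (γ / 2) (γ / ah))) with hD1_def
    set D2 := C2 * (Theta d ν t ^ k * hinv d ν (1 / t) ^ β *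
      t ^ (ε * k - min (β / 2) (β / ah))) with hD2_def
    have hD10 : 0 < D1 := by
      rw [hD1_def]
      refine mul_pos hC10 (mul_pos (mul_pos hΘtl hAtγ) (Real.rpow_pos_of_pos ht0 _))
    have hD20 : 0 < D2 := by
      rw [hD2_def]
      refine mul_pos hC20 (mul_pos (mul_pos hΘtk hAtβ) (Real.rpow_pos_of_pos ht0 _))
    -- pointwise bound
    have key : ∀ u ∈ Ioo (0:ℝ) t,
        Theta d ν u ^ l * u ^ (-η) * hinv d ν (1 / u) ^ γ *
          (Theta d ν (t - u) ^ k * (t - u) ^ (-θ) * hinv d ν (1 / (t - u)) ^ β) ≤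
        D1 * D2 * (u ^ (min (γ / 2) (γ / ah) - η - ε * l) *
          (t - u) ^ (min (β / 2) (β / ah) - θ - ε * k)) := by
      intro u hu
      have hu0 : 0 < u := hu.1
      have hut : u ≤ t := hu.2.le
      have hv0 : 0 < t - u := by linarith [hu.2]
      have hvt : t - u ≤ t := by linarith
      have b1 := hC1 t ht0 htT u hu0 hut
      have b2 := hC2 t ht0 htT (t - u) hv0 hvt
      have hΘv0 : (0:ℝ) ≤ Theta d ν (t - u) :=
        le_trans zero_le_one (Aux62.one_le_theta d ν (t - u))
      have lhs2nn : 0 ≤ Theta d ν (t - u) ^ k * (t - u) ^ (-θ) *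
          hinv d ν (1 / (t - u)) ^ β := by
        refine mul_nonneg (mul_nonneg (Real.rpow_nonneg hΘv0 _) (Real.rpow_nonneg hv0.le _))
          (Real.rpow_nonneg (Aux62.hinv_nonneg _) _)
      have rhs1nn : 0 ≤ D1 * u ^ (min (γ / 2) (γ / ah) - η - ε * l) :=
        mul_nonneg hD10.le (Real.rpow_nonneg hu0.le _)
      calc Theta d ν u ^ l * u ^ (-η) * hinv d ν (1 / u) ^ γ *
            (Theta d ν (t - u) ^ k * (t - u) ^ (-θ) * hinv d ν (1 / (t - u)) ^ β)
          ≤ D1 * u ^ (min (γ / 2) (γ / ah) - η - ε * l) *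
            (D2 * (t - u) ^ (min (β / 2) (β / ah) - θ - ε * k)) := by
            rw [hD1_def, hD2_def]
            exact mul_le_mul b1 b2 lhs2nn (by rw [← hD1_def]; exact rhs1nn)
        _ = D1 * D2 * (u ^ (min (γ / 2) (γ / ah) - η - ε * l) *
            (t - u) ^ (min (β / 2) (β / ah) - θ - ε * k)) := by ring
    -- measurability
    have hBmeas : Measurable (fun u : ℝ => if 0 < u then hinv d ν (1 / u) else 0) :=
      Aux62.measurable_B hν
    have hBt : Measurable (fun u : ℝ => if 0 < t - u then hinv d ν (1 / (t - u)) else 0) :=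
      hBmeas.comp (measurable_const.sub measurable_id)
    have hGmod : Measurable (fun u : ℝ =>
        (1 + Real.log (max 1 (if 0 < u then hinv d ν (1 / u) else 0)⁻¹)) ^ l * u ^ (-η) *
          (if 0 < u then hinv d ν (1 / u) else 0) ^ γ *
        ((1 + Real.log (max 1 (if 0 < t - u then hinv d ν (1 / (t - u)) else 0)⁻¹)) ^ k *
          (t - u) ^ (-θ) *
          (if 0 < t - u then hinv d ν (1 / (t - u)) else 0) ^ β)) := by
      have m1 : Measurable (fun u : ℝ =>
          (1 + Real.log (max 1 (if 0 < u then hinv d ν (1 / u) else 0)⁻¹)) ^ l) :=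
        (measurable_const.add (Real.measurable_log.comp
          (measurable_const.max hBmeas.inv))).pow measurable_const
      have m2 : Measurable (fun u : ℝ =>
          (1 + Real.log (max 1 (if 0 < t - u then hinv d ν (1 / (t - u)) else 0)⁻¹)) ^ k) :=
        (measurable_const.add (Real.measurable_log.comp
          (measurable_const.max hBt.inv))).pow measurable_const
      exact ((m1.mul (measurable_id.pow measurable_const)).mul
          (hBmeas.pow measurable_const)).mul
        ((m2.mul ((measurable_const.sub measurable_id).pow measurable_const)).mul
          (hBt.pow measurable_const))
    have hGeq : ∀ u ∈ Ioo (0:ℝ) t,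
        (1 + Real.log (max 1 (if 0 < u then hinv d ν (1 / u) else 0)⁻¹)) ^ l * u ^ (-η) *
          (if 0 < u then hinv d ν (1 / u) else 0) ^ γ *
        ((1 + Real.log (max 1 (if 0 < t - u then hinv d ν (1 / (t - u)) else 0)⁻¹)) ^ k *
          (t - u) ^ (-θ) *
          (if 0 < t - u then hinv d ν (1 / (t - u)) else 0) ^ β) =
        Theta d ν u ^ l * u ^ (-η) * hinv d ν (1 / u) ^ γ *
          (Theta d ν (t - u) ^ k * (t - u) ^ (-θ) * hinv d ν (1 / (t - u)) ^ β) := by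
      intro u hu
      have hu0 : 0 < u := hu.1
      have hv0 : 0 < t - u := by linarith [hu.2]
      rw [if_pos hu0, if_pos hv0]
      rfl
    have hGaesm : AEStronglyMeasurable (fun u : ℝ =>
        Theta d ν u ^ l * u ^ (-η) * hinv d ν (1 / u) ^ γ *
          (Theta d ν (t - u) ^ k * (t - u) ^ (-θ) * hinv d ν (1 / (t - u)) ^ β))
        (volume.restrict (Ioo 0 t)) := by
      refine hGmod.aestronglyMeasurable.congr ?_
      rw [Filter.eventuallyEq_iff_exists_mem]
      exact ⟨Ioo 0 t, (ae_restrict_iff' measurableSet_Ioo).2 (ae_of_all _ fun u hu => hu), hGeq⟩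
    obtain ⟨hKint, hKval⟩ := hK t ht0
    have hGnn : ∀ u ∈ Ioo (0:ℝ) t, 0 ≤
        Theta d ν u ^ l * u ^ (-η) * hinv d ν (1 / u) ^ γ *
          (Theta d ν (t - u) ^ k * (t - u) ^ (-θ) * hinv d ν (1 / (t - u)) ^ β) := by
      intro u hu
      have hu0 : 0 < u := hu.1
      have hv0 : 0 < t - u := by linarith [hu.2]
      have hΘu0 : (0:ℝ) ≤ Theta d ν u := le_trans zero_le_one (Aux62.one_le_theta d ν u)
      have hΘv0 : (0:ℝ) ≤ Theta d ν (t - u) :=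
        le_trans zero_le_one (Aux62.one_le_theta d ν (t - u))
      refine mul_nonneg (mul_nonneg (mul_nonneg (Real.rpow_nonneg hΘu0 _)
        (Real.rpow_nonneg hu0.le _)) (Real.rpow_nonneg (Aux62.hinv_nonneg _) _))
        (mul_nonneg (mul_nonneg (Real.rpow_nonneg hΘv0 _) (Real.rpow_nonneg hv0.le _))
          (Real.rpow_nonneg (Aux62.hinv_nonneg _) _))
    have hGint : IntegrableOn (fun u : ℝ =>
        Theta d ν u ^ l * u ^ (-η) * hinv d ν (1 / u) ^ γ *
          (Theta d ν (t - u) ^ k * (t - u) ^ (-θ) * hinv d ν (1 / (t - u)) ^ β))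
        (Ioo 0 t) := by
      refine Integrable.mono' (hKint.const_mul (D1 * D2)) hGaesm ?_
      rw [ae_restrict_iff' measurableSet_Ioo]
      refine ae_of_all _ fun u hu => ?_
      rw [Real.norm_eq_abs, abs_of_nonneg (hGnn u hu)]
      exact key u hu
    refine ⟨hGint, ?_⟩
    have e5 : Theta d ν t ^ (l + k) = Theta d ν t ^ l * Theta d ν t ^ k :=
      Real.rpow_add hΘt0 l k
    have e6 : hinv d ν (1 / t) ^ (γ + β) = hinv d ν (1 / t) ^ γ * hinv d ν (1 / t) ^ β :=
      Real.rpow_add hAt γ β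
    have e7 : t ^ ((1:ℝ) - η - θ) = t ^ (ε * l - min (γ / 2) (γ / ah)) *
        t ^ (ε * k - min (β / 2) (β / ah)) *
        t ^ (min (γ / 2) (γ / ah) - η - ε * l + (min (β / 2) (β / ah) - θ - ε * k) + 1) := by
      rw [← Real.rpow_add ht0, ← Real.rpow_add ht0]
      congr 1
      ring
    calc (∫ u in Ioo (0:ℝ) t,
            Theta d ν u ^ l * u ^ (-η) * hinv d ν (1 / u) ^ γ *
              (Theta d ν (t - u) ^ k * (t - u) ^ (-θ) * hinv d ν (1 / (t - u)) ^ β))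
        ≤ ∫ u in Ioo (0:ℝ) t, D1 * D2 * (u ^ (min (γ / 2) (γ / ah) - η - ε * l) *
            (t - u) ^ (min (β / 2) (β / ah) - θ - ε * k)) :=
          setIntegral_mono_on hGint (hKint.const_mul (D1 * D2)) measurableSet_Ioo key
      _ = D1 * D2 * ∫ u in Ioo (0:ℝ) t, u ^ (min (γ / 2) (γ / ah) - η - ε * l) *
            (t - u) ^ (min (β / 2) (β / ah) - θ - ε * k) := integral_const_mul _ _
      _ ≤ D1 * D2 * (K * t ^ (min (γ / 2) (γ / ah) - η - ε * l +
            (min (β / 2) (β / ah) - θ - ε * k) + 1)) :=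
          mul_le_mul_of_nonneg_left hKval (mul_pos hD10 hD20).le
      _ = (C1 * C2 * K) * (Theta d ν t ^ l * Theta d ν t ^ k *
            (t ^ (ε * l - min (γ / 2) (γ / ah)) * t ^ (ε * k - min (β / 2) (β / ah)) *
              t ^ (min (γ / 2) (γ / ah) - η - ε * l +
                (min (β / 2) (β / ah) - θ - ε * k) + 1)) *
            (hinv d ν (1 / t) ^ γ * hinv d ν (1 / t) ^ β)) := by
          rw [hD1_def, hD2_def]; ring
      _ ≤ max (C1 * C2 * K) (2 * CT) * (Theta d ν t ^ l * Theta d ν t ^ k *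
            (t ^ (ε * l - min (γ / 2) (γ / ah)) * t ^ (ε * k - min (β / 2) (β / ah)) *
              t ^ (min (γ / 2) (γ / ah) - η - ε * l +
                (min (β / 2) (β / ah) - θ - ε * k) + 1)) *
            (hinv d ν (1 / t) ^ γ * hinv d ν (1 / t) ^ β)) := by
          refine mul_le_mul_of_nonneg_right (le_max_left _ _) ?_
          have h1 : 0 < t ^ (ε * l - min (γ / 2) (γ / ah)) := Real.rpow_pos_of_pos ht0 _
          have h2 : 0 < t ^ (ε * k - min (β / 2) (β / ah)) := Real.rpow_pos_of_pos ht0 _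
          have h3 : 0 < t ^ (min (γ / 2) (γ / ah) - η - ε * l +
            (min (β / 2) (β / ah) - θ - ε * k) + 1) := Real.rpow_pos_of_pos ht0 _
          positivity
      _ = max (C1 * C2 * K) (2 * CT) * Theta d ν t ^ (l + k) * t ^ ((1:ℝ) - η - θ) *
            hinv d ν (1 / t) ^ (γ + β) := by
          rw [e5, e6, e7]; ring
  · -- Theta doubling
    intro t htmem
    obtain ⟨ht0, htT⟩ := htmem
    have hΘt1 : (1:ℝ) ≤ Theta d ν t := Aux62.one_le_theta d ν t
    have h1 := hCT t ht0 htT (t / 2) (by linarith) (by linarith)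
    have h2 : t / (t / 2) = 2 := by
      field_simp
    rw [h2, Real.rpow_one] at h1
    calc Theta d ν (t / 2) ≤ CT * (2 * Theta d ν t) := h1
      _ = 2 * CT * Theta d ν t := by ring
      _ ≤ max (C1 * C2 * K) (2 * CT) * Theta d ν t := by
          refine mul_le_mul_of_nonneg_right (le_max_right _ _) (by linarith)

end
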